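/- Fix ε ∈ (0,1] and set λ_t = ε·t^{-3/4} for t ≥ 1. Given a sequence (j_t)_{t≥1} with j_t ∈ {0,1}, define sequences (x_t)_{t≥1} and (α_t)_{t≥1} recursively by: α_t = ∏_{s=1}^{t-1}(1 − x_s) (so α_1 = 1); R¹_{t-1} = max(0, ∑_{s=1}^{t-1} α_s x_s (1 − 2j_s)) and R²_{t-1} = max(0, ∑_{s=1}^{t-1} α_s (λ_s^{-1} x_s − 1)(1 − 2j_s)); and x_t = 0 if (R¹_{t-1}, R²_{t-1}) = (0,0), and x_t = λ_t²·R²_{t-1} / (R¹_{t-1} + λ_t·R²_{t-1}) otherwise. Then for every T ≥ ε^{-8}: (1/T)·∑_{t=1}^T ∑_{s=1}^{t-1} α_s x_s (2j_s − 1) + (1/T)·∑_{t=1}^T α_t (2x_t − 1)(2j_t − 1) ≥ −9ε. -/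

import Mathlib

open Finset

lemma bm_aux_sum32 (t : ℕ) : ∑ s ∈ Icc 1 t, ((s:ℝ))^(-(3:ℝ)/2) ≤ 3 := by
  have key : ∀ n : ℕ, 1 ≤ n → ∑ s ∈ Icc 1 n, ((s:ℝ))^(-(3:ℝ)/2) ≤ 3 - 2 / Real.sqrt n := by
    intro n hn
    induction n with
    | zero => omega
    | succ m ih =>
      rcases Nat.eq_or_lt_of_le hn with h1 | h1
      · have hm : m = 0 := by omega
        subst hm
        simp [Finset.Icc_self, Real.one_rpow, Real.sqrt_one]; norm_num
      · have hm1 : 1 ≤ m := by omega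
        have hrec := Finset.sum_Icc_succ_top (by omega : 1 ≤ m + 1) (fun s : ℕ => ((s:ℝ))^(-(3:ℝ)/2))
        rw [hrec]
        have hm0 : (0:ℝ) < m := by exact_mod_cast hm1
        set a := Real.sqrt m with ha
        set c := Real.sqrt ((m:ℝ)+1) with hc
        have ha0 : 0 < a := Real.sqrt_pos.mpr hm0
        have hc0 : 0 < c := Real.sqrt_pos.mpr (by linarith)
        have ha2 : a^2 = m := Real.sq_sqrt hm0.le
        have hc2 : c^2 = (m:ℝ)+1 := Real.sq_sqrt (by linarith)
        have hac : a ≤ c := Real.sqrt_le_sqrt (by linarith)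
        have hd : c^2 - a^2 = 1 := by rw [ha2, hc2]; ring
        have hval : ((m+1:ℕ):ℝ)^(-(3:ℝ)/2) = (c^3)⁻¹ := by
          have h32 : ((m:ℝ)+1) ^ ((3:ℝ)/2) = c^3 := by
            rw [hc, Real.sqrt_eq_rpow, ← Real.rpow_natCast (((m:ℝ)+1) ^ ((1:ℝ)/2)) 3,
              ← Real.rpow_mul (by linarith)]
            norm_num
          push_cast
          rw [show (-(3:ℝ)/2) = -((3:ℝ)/2) by norm_num, Real.rpow_neg (by linarith), h32]
        have hmain : a ≤ (2*c - 2*a) * c^2 := by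
          have h5 : 0 ≤ 2*c^2 - a*c - a^2 := by
            nlinarith [mul_nonneg (sub_nonneg.mpr hac) (by positivity : (0:ℝ) ≤ 2*c + a)]
          have hG : ((2*c - 2*a) * c^2 - a) * (c+a) = 2*c^2 - a*c - a^2 := by
            linear_combination (2*c^2) * hd
          nlinarith [h5, hG, ha0, hc0]
        have hstep : ((m+1:ℕ):ℝ)^(-(3:ℝ)/2) ≤ 2/a - 2/c := by
          rw [hval, inv_eq_one_div, div_sub_div _ _ ha0.ne' hc0.ne',
            div_le_div_iff₀ (by positivity) (by positivity)]
          have := mul_le_mul_of_nonneg_right hmain hc0.le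
          nlinarith [this]
        have hih := ih hm1
        have hcast : Real.sqrt ((m+1:ℕ):ℝ) = c := by push_cast; rfl
        rw [hcast]
        linarith
  rcases Nat.eq_zero_or_pos t with h | h
  · subst h; simp
  · have := key t h
    have h2 : 0 ≤ 2 / Real.sqrt t := by positivity
    linarith

set_option maxHeartbeats 4000000 in
/-- Pathwise ε-uniform optimality guarantee for Player I's Blackwell strategy in the Big Match: for every `T ≥ ε⁻⁸` the (pathwise) `T`-stage payoff is at least `−9ε`. -/
theorem big_match_epsilon_optimal_guarantee
    (ε : ℝ) (hε : ε ∈ Set.Ioc (0 : ℝ) 1)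
    (lam : ℕ → ℝ) (hlam : ∀ t : ℕ, 1 ≤ t → lam t = ε * (t : ℝ) ^ (-(3 : ℝ) / 4))
    (j : ℕ → ℝ) (hj : ∀ t, j t = 0 ∨ j t = 1)
    (x α : ℕ → ℝ)
    (hα : ∀ t, α t = ∏ s ∈ Finset.Icc 1 (t - 1), (1 - x s))
    (R1 R2 : ℕ → ℝ)
    (hR1 : ∀ t, R1 t = max 0 (∑ s ∈ Finset.Icc 1 t, α s * x s * (1 - 2 * j s)))
    (hR2 : ∀ t, R2 t =
      max 0 (∑ s ∈ Finset.Icc 1 t, α s * ((lam s)⁻¹ * x s - 1) * (1 - 2 * j s)))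
    (hx : ∀ t : ℕ, 1 ≤ t →
      x t = if R1 (t - 1) = 0 ∧ R2 (t - 1) = 0 then 0
        else lam t ^ 2 * R2 (t - 1) / (R1 (t - 1) + lam t * R2 (t - 1))) :
    ∀ T : ℕ, ε ^ (-8 : ℤ) ≤ (T : ℝ) →
      (T : ℝ)⁻¹ * (∑ t ∈ Finset.Icc 1 T, ∑ s ∈ Finset.Icc 1 (t - 1),
          α s * x s * (2 * j s - 1)) +
        (T : ℝ)⁻¹ * (∑ t ∈ Finset.Icc 1 T,
          α t * (2 * x t - 1) * (2 * j t - 1)) ≥ -9 * ε := by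
  obtain ⟨hε0, hε1⟩ := hε
  -- abbreviations for the two running sums
  obtain ⟨S1, hS1⟩ : ∃ S1 : ℕ → ℝ, ∀ t, S1 t = ∑ s ∈ Icc 1 t, α s * x s * (1 - 2 * j s) :=
    ⟨_, fun _ => rfl⟩
  obtain ⟨S2, hS2⟩ : ∃ S2 : ℕ → ℝ,
      ∀ t, S2 t = ∑ s ∈ Icc 1 t, α s * ((lam s)⁻¹ * x s - 1) * (1 - 2 * j s) :=
    ⟨_, fun _ => rfl⟩
  have hR1' : ∀ t, R1 t = max 0 (S1 t) := fun t => by rw [hR1, hS1]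
  have hR2' : ∀ t, R2 t = max 0 (S2 t) := fun t => by rw [hR2, hS2]
  have hR1nn : ∀ t, 0 ≤ R1 t := fun t => by rw [hR1']; exact le_max_left _ _
  have hR2nn : ∀ t, 0 ≤ R2 t := fun t => by rw [hR2']; exact le_max_left _ _
  have hS1R1 : ∀ t, S1 t ≤ R1 t := fun t => by rw [hR1']; exact le_max_right _ _
  have hS2R2 : ∀ t, S2 t ≤ R2 t := fun t => by rw [hR2']; exact le_max_right _ _
  have hS10 : S1 0 = 0 := by rw [hS1]; simp
  have hS20 : S2 0 = 0 := by rw [hS2]; simp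
  -- facts about lam
  have hlam_pos : ∀ t, 1 ≤ t → 0 < lam t := by
    intro t ht
    rw [hlam t ht]
    have h1 : (0:ℝ) < (t:ℝ) := by exact_mod_cast ht
    positivity
  have hlam_le1 : ∀ t, 1 ≤ t → lam t ≤ 1 := by
    intro t ht
    rw [hlam t ht]
    have h1t : (1:ℝ) ≤ (t:ℝ) := by exact_mod_cast ht
    have h2 := Real.rpow_le_one_of_one_le_of_nonpos h1t (by norm_num : (-(3:ℝ)/4) ≤ 0)
    nlinarith
  have hlam_anti : ∀ s t : ℕ, 1 ≤ s → s ≤ t → lam t ≤ lam s := by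
    intro s t hs hst
    rw [hlam s hs, hlam t (le_trans hs hst)]
    have hs0 : (0:ℝ) < (s:ℝ) := by exact_mod_cast hs
    have h2 := Real.rpow_le_rpow_of_nonpos hs0 (by exact_mod_cast hst : (s:ℝ) ≤ (t:ℝ))
      (by norm_num : (-(3:ℝ)/4) ≤ 0)
    nlinarith [Real.rpow_pos_of_pos hs0 (-(3:ℝ)/4)]
  -- bounds on x
  have hx0 : ∀ t, 1 ≤ t → 0 ≤ x t := by
    intro t ht
    rw [hx t ht]
    split_ifs with h
    · exact le_refl 0
    · exact div_nonneg (mul_nonneg (sq_nonneg _) (hR2nn _))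
        (add_nonneg (hR1nn _) (mul_nonneg (hlam_pos t ht).le (hR2nn _)))
  have hD : ∀ t, 1 ≤ t → ¬(R1 (t-1) = 0 ∧ R2 (t-1) = 0) →
      0 < R1 (t-1) + lam t * R2 (t-1) := by
    intro t ht h
    rcases eq_or_lt_of_le (hR1nn (t-1)) with h1 | h1
    · rcases eq_or_lt_of_le (hR2nn (t-1)) with h2 | h2
      · exact absurd ⟨h1.symm, h2.symm⟩ h
      · have := mul_pos (hlam_pos t ht) h2; linarith
    · have := mul_nonneg (hlam_pos t ht).le (hR2nn (t-1)); linarith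
  have hxle : ∀ t, 1 ≤ t → x t ≤ lam t := by
    intro t ht
    rw [hx t ht]
    split_ifs with h
    · exact (hlam_pos t ht).le
    · have hD' := hD t ht h
      rw [div_le_iff₀ hD']
      have h1 := hR1nn (t-1)
      have h3 := hlam_pos t ht
      nlinarith
  -- bounds on α
  have hα01 : ∀ t, 0 ≤ α t ∧ α t ≤ 1 := by
    intro t
    rw [hα t]
    constructor
    · apply Finset.prod_nonneg
      intro s hs
      have hs1 : 1 ≤ s := (Finset.mem_Icc.mp hs).1
      have := hxle s hs1; have := hlam_le1 s hs1; linarith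
    · apply Finset.prod_le_one
      · intro s hs
        have hs1 : 1 ≤ s := (Finset.mem_Icc.mp hs).1
        have := hxle s hs1; have := hlam_le1 s hs1; linarith
      · intro s hs
        have := hx0 s (Finset.mem_Icc.mp hs).1; linarith
  have hαrec : ∀ t, 1 ≤ t → α (t+1) = α t * (1 - x t) := by
    intro t ht
    obtain ⟨n, rfl⟩ : ∃ n, t = n + 1 := ⟨t - 1, by omega⟩
    rw [hα (n+1+1), hα (n+1)]
    simp only [Nat.add_sub_cancel]
    rw [Finset.prod_Icc_succ_top (by omega : 1 ≤ n + 1)]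
  have hαxeq : ∀ t, ∑ s ∈ Icc 1 t, α s * x s = 1 - α (t+1) := by
    intro t
    induction t with
    | zero => rw [hα 1]; simp
    | succ n ihn =>
      rw [Finset.sum_Icc_succ_top (by omega : 1 ≤ n+1), ihn, hαrec (n+1) (by omega)]
      ring
  have hαxsum : ∀ t, ∑ s ∈ Icc 1 t, α s * x s ≤ 1 := by
    intro t
    rw [hαxeq]
    have := (hα01 (t+1)).1
    linarith
  have hbb : ∀ t, (1 - 2 * j t) = 1 ∨ (1 - 2 * j t) = -1 := by
    intro t
    rcases hj t with h | h <;> rw [h] <;> norm_num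
  have hb2 : ∀ t, (1 - 2 * j t)^2 = 1 := by
    intro t
    rcases hbb t with h | h <;> rw [h] <;> norm_num
  -- the Blackwell key identity
  have hkey : ∀ t, 1 ≤ t →
      R1 (t-1) * (α t * x t * (1 - 2*j t))
        + lam t ^ 2 * R2 (t-1) * (α t * ((lam t)⁻¹ * x t - 1) * (1 - 2*j t)) = 0 := by
    intro t ht
    have hl := hlam_pos t ht
    rcases em (R1 (t-1) = 0 ∧ R2 (t-1) = 0) with h | h
    · have hx0' : x t = 0 := by rw [hx t ht]; simp [h]
      rw [h.1, h.2, hx0']; ring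
    · have hD' := hD t ht h
      have hxt : x t * (R1 (t-1) + lam t * R2 (t-1)) = lam t ^ 2 * R2 (t-1) := by
        rw [hx t ht, if_neg h, div_mul_cancel₀ _ hD'.ne']
      have hinv : lam t ^ 2 * (lam t)⁻¹ = lam t := by
        field_simp
      linear_combination ((α t) * (1 - 2*j t)) * hxt
        + ((α t) * (1 - 2*j t) * (R2 (t-1)) * (x t)) * hinv
  -- one-step drift bound
  have hstep : ∀ n : ℕ, R1 (n+1)^2 + lam (n+1)^2 * R2 (n+1)^2
      ≤ R1 n^2 + lam (n+1)^2 * R2 n^2 + 2 * lam (n+1)^2 := by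
    intro n
    have ht : 1 ≤ n + 1 := by omega
    have hl := hlam_pos (n+1) ht
    have hα' := hα01 (n+1)
    have hx0' := hx0 (n+1) ht
    have hxl := hxle (n+1) ht
    have hb2t := hb2 (n+1)
    obtain ⟨G1, hG1⟩ : ∃ g, g = α (n+1) * x (n+1) * (1 - 2*j (n+1)) := ⟨_, rfl⟩
    obtain ⟨G2, hG2⟩ : ∃ g, g = α (n+1) * ((lam (n+1))⁻¹ * x (n+1) - 1) * (1 - 2*j (n+1)) :=
      ⟨_, rfl⟩
    have hkey' := hkey (n+1) ht
    simp only [Nat.add_sub_cancel] at hkey'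
    rw [← hG1, ← hG2] at hkey'
    have hS1rec : S1 (n+1) = S1 n + G1 := by
      rw [hS1, hS1, Finset.sum_Icc_succ_top (by omega : 1 ≤ n+1), hG1]
    have hS2rec : S2 (n+1) = S2 n + G2 := by
      rw [hS2, hS2, Finset.sum_Icc_succ_top (by omega : 1 ≤ n+1), hG2]
    have hup : ∀ (R S : ℕ → ℝ) (g : ℝ), (∀ t, R t = max 0 (S t)) → (∀ t, S t ≤ R t) →
        S (n+1) = S n + g → R (n+1)^2 ≤ (R n + g)^2 := by
      intro R S g hR hSR hrec
      have hle : R (n+1) ≤ max 0 (R n + g) := by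
        rw [hR (n+1), hrec]
        exact max_le_max le_rfl (by have := hSR n; linarith)
      have h0 : 0 ≤ R (n+1) := by rw [hR (n+1)]; exact le_max_left _ _
      have hmax : (max 0 (R n + g))^2 ≤ (R n + g)^2 := by
        rcases le_total (R n + g) 0 with h | h
        · rw [max_eq_left h]
          simpa using sq_nonneg (R n + g)
        · rw [max_eq_right h]
      calc R (n+1)^2 ≤ (max 0 (R n + g))^2 := by
            apply pow_le_pow_left₀ h0 hle
        _ ≤ (R n + g)^2 := hmax
    have hup1 := hup R1 S1 G1 hR1' hS1R1 hS1rec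
    have hup2 := hup R2 S2 G2 hR2' hS2R2 hS2rec
    -- increment bounds
    have hαx1 : 0 ≤ α (n+1) * x (n+1) := mul_nonneg hα'.1 hx0'
    have hαx2 : α (n+1) * x (n+1) ≤ lam (n+1) :=
      le_trans (mul_le_of_le_one_left hx0' hα'.2) hxl
    have hg1 : G1^2 ≤ lam (n+1)^2 := by
      have hb : G1^2 = (α (n+1) * x (n+1))^2 := by rw [hG1, mul_pow, hb2t, mul_one]
      rw [hb]
      nlinarith [hαx1, hαx2]
    have hu1 : (lam (n+1))⁻¹ * x (n+1) ≤ 1 := by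
      rw [inv_mul_eq_div, div_le_one hl]; exact hxl
    have hu0 : 0 ≤ (lam (n+1))⁻¹ * x (n+1) := mul_nonneg (inv_nonneg.mpr hl.le) hx0'
    have hg2 : G2^2 ≤ 1 := by
      have hb : G2^2 = (α (n+1) * ((lam (n+1))⁻¹ * x (n+1) - 1))^2 := by
        rw [hG2, mul_pow, hb2t, mul_one]
      rw [hb]
      have h1 : 0 ≤ α (n+1) * (1 - (lam (n+1))⁻¹ * x (n+1)) := mul_nonneg hα'.1 (by linarith)
      have h2 : α (n+1) * (1 - (lam (n+1))⁻¹ * x (n+1)) ≤ 1 :=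
        mul_le_one₀ hα'.2 (by linarith) (by linarith)
      nlinarith [h1, h2]
    have e1 : (R1 n + G1)^2 = R1 n^2 + 2*(R1 n * G1) + G1^2 := by ring
    have hup2' := mul_le_mul_of_nonneg_left hup2 (sq_nonneg (lam (n+1)))
    have e2 : lam (n+1)^2 * (R2 n + G2)^2
        = lam (n+1)^2 * R2 n^2 + 2*(lam (n+1)^2 * (R2 n * G2)) + lam (n+1)^2 * G2^2 := by ring
    have hkey'' : R1 n * G1 + lam (n+1)^2 * (R2 n * G2) = 0 := by linear_combination hkey'
    have hg2' : lam (n+1)^2 * G2^2 ≤ lam (n+1)^2 * 1 :=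
      mul_le_mul_of_nonneg_left hg2 (sq_nonneg (lam (n+1)))
    linarith [hup1, e1, hup2', e2, hkey'', hg1, hg2']
  -- cumulative potential bound
  have hΦ : ∀ t : ℕ, R1 t^2 + lam (t+1)^2 * R2 t^2 ≤ 2 * ∑ s ∈ Icc 1 t, lam s ^ 2 := by
    intro t
    induction t with
    | zero =>
      have h1 : R1 0 = 0 := by rw [hR1', hS10]; simp
      have h2 : R2 0 = 0 := by rw [hR2', hS20]; simp
      simp [h1, h2]
    | succ n ihn =>
      have hstep' := hstep n
      have hmono : lam (n+1+1) ≤ lam (n+1) := hlam_anti (n+1) (n+1+1) (by omega) (by omega)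
      have hl2 := hlam_pos (n+1+1) (by omega)
      have hmono2 : lam (n+1+1)^2 ≤ lam (n+1)^2 := by nlinarith
      rw [Finset.sum_Icc_succ_top (by omega : 1 ≤ n+1)]
      nlinarith [mul_le_mul_of_nonneg_right hmono2 (sq_nonneg (R2 (n+1))), ihn, hstep']
  have hΦ6 : ∀ t, R1 t^2 + lam (t+1)^2 * R2 t^2 ≤ 6 * ε^2 := by
    intro t
    have h1 := hΦ t
    have h2 : ∑ s ∈ Icc 1 t, lam s ^ 2 ≤ 3 * ε^2 := by
      have h3 : ∀ s ∈ Icc 1 t, lam s ^ 2 = ε^2 * ((s:ℝ))^(-(3:ℝ)/2) := by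
        intro s hs
        have hs1 : 1 ≤ s := (Finset.mem_Icc.mp hs).1
        rw [hlam s hs1, mul_pow]
        congr 1
        rw [← Real.rpow_natCast ((s:ℝ)^(-(3:ℝ)/4)) 2, ← Real.rpow_mul (Nat.cast_nonneg s)]
        norm_num
      rw [Finset.sum_congr rfl h3, ← Finset.mul_sum]
      have h4 := bm_aux_sum32 t
      nlinarith [mul_le_mul_of_nonneg_left h4 (sq_nonneg ε)]
    linarith
  -- norm bounds from the potential
  have hsqrt6 : Real.sqrt 6 ^ 2 = 6 := Real.sq_sqrt (by norm_num)
  have hsqrt6nn : (0:ℝ) ≤ Real.sqrt 6 := Real.sqrt_nonneg 6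
  have hsqrt6le : Real.sqrt 6 ≤ 2.5 := by nlinarith
  have hR1b : ∀ t, R1 t ≤ Real.sqrt 6 * ε := by
    intro t
    have h1 := hΦ6 t
    have h2 : R1 t ^ 2 ≤ 6 * ε^2 := by
      nlinarith [mul_nonneg (sq_nonneg (lam (t+1))) (sq_nonneg (R2 t))]
    nlinarith [hR1nn t, mul_nonneg hsqrt6nn hε0.le, hsqrt6]
  -- now fix T
  intro T hT
  have hTpos : (0:ℝ) < (T:ℝ) := lt_of_lt_of_le (zpow_pos hε0 _) hT
  have hT1 : 1 ≤ T := by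
    have : 0 < T := by exact_mod_cast hTpos
    omega
  have hT1R : (1:ℝ) ≤ (T:ℝ) := by exact_mod_cast hT1
  have hε8T : 1 ≤ ε^8 * (T:ℝ) := by
    have h1 : ε ^ (-8:ℤ) = (ε^8)⁻¹ := by
      rw [zpow_neg]
      norm_cast
    rw [h1] at hT
    have h2 : (0:ℝ) < ε^8 := by positivity
    have h3 := mul_le_mul_of_nonneg_left hT h2.le
    rw [mul_inv_cancel₀ h2.ne'] at h3
    linarith
  have h8 : ε^8 ≤ (1/2:ℝ)^8 ∨ (1/2:ℝ) < ε := by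
    rcases le_or_gt ε (1/2) with h | h
    · exact Or.inl (pow_le_pow_left₀ hε0.le h 8)
    · exact Or.inr h
  have hp34 : (0:ℝ) < (T:ℝ)^((3:ℝ)/4) := Real.rpow_pos_of_pos hTpos _
  have hp14 : (0:ℝ) < (T:ℝ)^((1:ℝ)/4) := Real.rpow_pos_of_pos hTpos _
  have hT34 : (T:ℝ)^((3:ℝ)/4) ≤ ε^2 * (T:ℝ) := by
    have h44 : ((T:ℝ)^((1:ℝ)/4))^(4:ℕ) = (T:ℝ) := by
      rw [← Real.rpow_natCast ((T:ℝ)^((1:ℝ)/4)) 4, ← Real.rpow_mul hTpos.le]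
      norm_num
    have hu : 1 ≤ ε^2 * (T:ℝ)^((1:ℝ)/4) := by
      by_contra hcon
      push_neg at hcon
      have h0 : (0:ℝ) ≤ ε^2 * (T:ℝ)^((1:ℝ)/4) := by positivity
      have h4 : (ε^2 * (T:ℝ)^((1:ℝ)/4))^(4:ℕ) < 1 := pow_lt_one₀ h0 hcon (by norm_num)
      rw [mul_pow, h44] at h4
      nlinarith [hε8T]
    have hsplit : (T:ℝ)^((3:ℝ)/4) * (T:ℝ)^((1:ℝ)/4) = (T:ℝ) := by
      rw [← Real.rpow_add hTpos]
      norm_num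
    nlinarith [mul_le_mul_of_nonneg_left hu hp34.le, hsplit]
  have hT14inv : ((T:ℝ)+1)^((3:ℝ)/4) ≤ 2 * (T:ℝ)^((3:ℝ)/4) := by
    have ha : ((T:ℝ)+1) ≤ 2*(T:ℝ) := by linarith
    have hb' : ((T:ℝ)+1)^((3:ℝ)/4) ≤ (2*(T:ℝ))^((3:ℝ)/4) :=
      Real.rpow_le_rpow (by positivity) ha (by norm_num)
    have hc' : ((2:ℝ)*(T:ℝ))^((3:ℝ)/4) = (2:ℝ)^((3:ℝ)/4) * (T:ℝ)^((3:ℝ)/4) :=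
      Real.mul_rpow (by norm_num) hTpos.le
    have hd' : (2:ℝ)^((3:ℝ)/4) ≤ 2 := by
      calc (2:ℝ)^((3:ℝ)/4) ≤ (2:ℝ)^(1:ℝ) :=
            Real.rpow_le_rpow_of_exponent_le (by norm_num) (by norm_num)
        _ = 2 := Real.rpow_one 2
    nlinarith [hp34]
  have hR2T : R2 T ≤ Real.sqrt 6 * ((T:ℝ)+1)^((3:ℝ)/4) := by
    have hl := hlam_pos (T+1) (by omega)
    have h2 : (lam (T+1) * R2 T)^2 ≤ 6 * ε^2 := by
      nlinarith [hΦ6 T, sq_nonneg (R1 T)]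
    have h3 : lam (T+1) * R2 T ≤ Real.sqrt 6 * ε := by
      nlinarith [h2, hsqrt6, mul_nonneg hl.le (hR2nn T), mul_nonneg hsqrt6nn hε0.le]
    have hlexp : lam (T+1) = ε * ((T:ℝ)+1)^(-(3:ℝ)/4) := by
      rw [hlam (T+1) (by omega)]
      push_cast
      norm_num
    rw [hlexp] at h3
    have hq : (0:ℝ) < ((T:ℝ)+1)^((3:ℝ)/4) := Real.rpow_pos_of_pos (by linarith) _
    have hinv2 : ((T:ℝ)+1)^(-(3:ℝ)/4) * ((T:ℝ)+1)^((3:ℝ)/4) = 1 := by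
      rw [← Real.rpow_add (by linarith : (0:ℝ) < (T:ℝ)+1)]
      norm_num
    have h5 := mul_le_mul_of_nonneg_right h3 hq.le
    have hinv3 : ε * R2 T * (((T:ℝ)+1)^(-(3:ℝ)/4) * ((T:ℝ)+1)^((3:ℝ)/4)) = ε * R2 T := by
      rw [hinv2, mul_one]
    have h6 : ε * R2 T ≤ ε * (Real.sqrt 6 * ((T:ℝ)+1)^((3:ℝ)/4)) := by
      nlinarith [h5, hinv3]
    exact le_of_mul_le_mul_left h6 hε0
  -- rewrite the two payoff sums
  have hA1 : (∑ t ∈ Icc 1 T, ∑ s ∈ Icc 1 (t - 1), α s * x s * (2 * j s - 1))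
      = -∑ t ∈ Icc 1 T, S1 (t-1) := by
    rw [← Finset.sum_neg_distrib]
    refine Finset.sum_congr rfl fun t _ => ?_
    rw [hS1, ← Finset.sum_neg_distrib]
    exact Finset.sum_congr rfl fun s _ => by ring
  have hA2 : (∑ t ∈ Icc 1 T, α t * (2 * x t - 1) * (2 * j t - 1))
      = -(∑ t ∈ Icc 1 T, (2 - (lam t)⁻¹) * (α t * x t * (1 - 2 * j t))) - S2 T := by
    have h1 : ∀ t ∈ Icc 1 T, α t * (2 * x t - 1) * (2 * j t - 1)
        = -((2 - (lam t)⁻¹) * (α t * x t * (1 - 2 * j t)))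
          - α t * ((lam t)⁻¹ * x t - 1) * (1 - 2 * j t) := fun t _ => by ring
    rw [Finset.sum_congr rfl h1, Finset.sum_sub_distrib, Finset.sum_neg_distrib, hS2]
  -- bounds on the three pieces
  have hB1 : ∑ t ∈ Icc 1 T, S1 (t-1) ≤ (T:ℝ) * (Real.sqrt 6 * ε) := by
    calc ∑ t ∈ Icc 1 T, S1 (t-1) ≤ ∑ _t ∈ Icc 1 T, Real.sqrt 6 * ε :=
          Finset.sum_le_sum fun t _ => le_trans (hS1R1 _) (hR1b _)
      _ = (T:ℝ) * (Real.sqrt 6 * ε) := by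
          rw [Finset.sum_const, Nat.card_Icc]
          simp [nsmul_eq_mul]
  have hB2 : ∑ t ∈ Icc 1 T, (2 - (lam t)⁻¹) * (α t * x t * (1 - 2 * j t))
      ≤ 2 * (Real.sqrt 6 * ε) + (lam T)⁻¹ := by
    have hsplit : ∀ t ∈ Icc 1 T, (2 - (lam t)⁻¹) * (α t * x t * (1 - 2 * j t))
        = 2 * (α t * x t * (1 - 2 * j t)) + -(lam t)⁻¹ * (α t * x t * (1 - 2 * j t)) :=
      fun t _ => by ring
    rw [Finset.sum_congr rfl hsplit, Finset.sum_add_distrib]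
    have hTl := hlam_pos T hT1
    have hB2a : ∑ t ∈ Icc 1 T, 2 * (α t * x t * (1 - 2 * j t)) = 2 * S1 T := by
      rw [hS1, Finset.mul_sum]
    have hB2b : ∑ t ∈ Icc 1 T, -(lam t)⁻¹ * (α t * x t * (1 - 2 * j t)) ≤ (lam T)⁻¹ := by
      have hper : ∀ t ∈ Icc 1 T, -(lam t)⁻¹ * (α t * x t * (1 - 2 * j t))
          ≤ (lam T)⁻¹ * (α t * x t) := by
        intro t ht
        obtain ⟨ht1, htT⟩ := Finset.mem_Icc.mp ht
        have h1 : 0 ≤ α t * x t := mul_nonneg (hα01 t).1 (hx0 t ht1)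
        have h2 : (lam t)⁻¹ ≤ (lam T)⁻¹ := inv_anti₀ hTl (hlam_anti t T ht1 htT)
        have h3 : (0:ℝ) < (lam t)⁻¹ := inv_pos.mpr (hlam_pos t ht1)
        rcases hbb t with hb | hb <;> rw [hb] <;>
          nlinarith [mul_le_mul_of_nonneg_right h2 h1, mul_nonneg (le_of_lt h3) h1]
      calc ∑ t ∈ Icc 1 T, -(lam t)⁻¹ * (α t * x t * (1 - 2 * j t))
          ≤ ∑ t ∈ Icc 1 T, (lam T)⁻¹ * (α t * x t) := Finset.sum_le_sum hper
        _ = (lam T)⁻¹ * ∑ t ∈ Icc 1 T, α t * x t := by rw [Finset.mul_sum]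
        _ ≤ (lam T)⁻¹ * 1 := mul_le_mul_of_nonneg_left (hαxsum T) (inv_nonneg.mpr hTl.le)
        _ = (lam T)⁻¹ := mul_one _
    have h2S : 2 * S1 T ≤ 2 * (Real.sqrt 6 * ε) := by
      have := le_trans (hS1R1 T) (hR1b T)
      linarith
    linarith [hB2a, hB2b, h2S]
  have hlamTinv : (lam T)⁻¹ = ε⁻¹ * (T:ℝ)^((3:ℝ)/4) := by
    rw [hlam T hT1, mul_inv]
    congr 1
    rw [show (-(3:ℝ)/4) = -((3:ℝ)/4) by norm_num, Real.rpow_neg hTpos.le, inv_inv]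
  have hlamTinv2 : (lam T)⁻¹ ≤ ε * (T:ℝ) := by
    calc (lam T)⁻¹ = ε⁻¹ * (T:ℝ)^((3:ℝ)/4) := hlamTinv
      _ ≤ ε⁻¹ * (ε^2 * (T:ℝ)) := mul_le_mul_of_nonneg_left hT34 (inv_nonneg.mpr hε0.le)
      _ = ε * (T:ℝ) := by field_simp
  have hS2Tb : S2 T ≤ Real.sqrt 6 * (2 * (T:ℝ)^((3:ℝ)/4)) :=
    le_trans (hS2R2 T) (le_trans hR2T (mul_le_mul_of_nonneg_left hT14inv hsqrt6nn))
  obtain ⟨SA, hSAdef⟩ : ∃ a:ℝ, a = ∑ t ∈ Icc 1 T, S1 (t-1) := ⟨_, rfl⟩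
  obtain ⟨SB, hSBdef⟩ : ∃ a:ℝ,
      a = ∑ t ∈ Icc 1 T, (2 - (lam t)⁻¹) * (α t * x t * (1 - 2 * j t)) := ⟨_, rfl⟩
  obtain ⟨SC, hSCdef⟩ : ∃ a:ℝ, a = S2 T := ⟨_, rfl⟩
  rw [← hSAdef] at hB1 hA1
  rw [← hSBdef] at hB2 hA2
  rw [← hSCdef] at hS2Tb hA2
  -- the key inequality
  have key : SA + SB + SC ≤ 9 * ε * (T:ℝ) := by
    rcases le_or_gt ε (1/2) with hhalf | hhalf
    · -- small ε : fine bounds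
      have h8' : ε^8 ≤ (1/2:ℝ)^8 := pow_le_pow_left₀ hε0.le hhalf 8
      have hT256 : (256:ℝ) ≤ (T:ℝ) := by
        have := mul_le_mul_of_nonneg_right h8' hTpos.le
        nlinarith [hε8T]
      have c1 : 2 * (Real.sqrt 6 * ε) ≤ ε * (T:ℝ) := by
        nlinarith [hT256, hsqrt6le, hε0]
      have c2 : Real.sqrt 6 * (2 * (T:ℝ)^((3:ℝ)/4)) ≤ Real.sqrt 6 * (ε * (T:ℝ)) := by
        have h9 : 2 * (T:ℝ)^((3:ℝ)/4) ≤ ε * (T:ℝ) := by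
          nlinarith [hT34, hhalf, hε0, hTpos, mul_pos hε0 hTpos]
        exact mul_le_mul_of_nonneg_left h9 hsqrt6nn
      nlinarith [hB1, hB2, hS2Tb, c1, c2, hlamTinv2, hsqrt6le, mul_pos hε0 hTpos]
    · -- large ε : crude bounds
      have hA2lb : -(T:ℝ) ≤ ∑ t ∈ Icc 1 T, α t * (2 * x t - 1) * (2 * j t - 1) := by
        have hper : ∀ t ∈ Icc 1 T, (-1:ℝ) ≤ α t * (2 * x t - 1) * (2 * j t - 1) := by
          intro t ht
          have ht1 := (Finset.mem_Icc.mp ht).1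
          have hαt := hα01 t
          have hx0' := hx0 t ht1
          have hx1 : x t ≤ 1 := le_trans (hxle t ht1) (hlam_le1 t ht1)
          rcases hj t with hjt | hjt <;> rw [hjt] <;> nlinarith [hαt.1, hαt.2]
        calc -(T:ℝ) = ∑ _t ∈ Icc 1 T, (-1:ℝ) := by
              rw [Finset.sum_const, Nat.card_Icc]
              simp
          _ ≤ _ := Finset.sum_le_sum hper
      have hBS : SB + SC ≤ (T:ℝ) := by
        rw [hA2] at hA2lb
        linarith
      nlinarith [hB1, hBS, hsqrt6le, hsqrt6nn, hε0, hTpos, hhalf, mul_pos hε0 hTpos]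
  -- conclude
  have hAA : -(9 * ε * (T:ℝ))
      ≤ (∑ t ∈ Icc 1 T, ∑ s ∈ Icc 1 (t - 1), α s * x s * (2 * j s - 1))
        + ∑ t ∈ Icc 1 T, α t * (2 * x t - 1) * (2 * j t - 1) := by
    rw [hA1, hA2]
    linarith [key]
  have hTinv : (0:ℝ) ≤ (T:ℝ)⁻¹ := inv_nonneg.mpr hTpos.le
  rw [ge_iff_le]
  have h := mul_le_mul_of_nonneg_left hAA hTinv
  rw [mul_add] at h
  have heq : (T:ℝ)⁻¹ * (-(9 * ε * (T:ℝ))) = -9 * ε := by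
    field_simp
  linarith [h, heq.le, heq.ge]
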